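/- For all real numbers k and all δ ≥ 0, the real part of √(k² + iδ) satisfies |k| ≤ Re √(k² + iδ) ≤ √(k² + δ/2), where the square root branch is √(r e^{iθ}) = √r e^{iθ/2}, θ ∈ [0, 2π). -/

import Mathlib

open Complex Real

/-- The square root with branch `√(r e^{iθ}) = √r e^{iθ/2}`, `θ ∈ [0, 2π)`. -/
noncomputable def branchSqrt (z : ℂ) : ℂ :=
  if z = 0 then 0 else
    (Real.sqrt ‖z‖ : ℂ) *
      Complex.exp (Complex.I *
        (((if Complex.arg z < 0 then Complex.arg z + 2 * Real.pi else Complex.arg z) : ℝ) / 2))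

theorem re_branchSqrt_add_bounds (k δ : ℝ) (hδ : 0 ≤ δ) :
    |k| ≤ (branchSqrt ((k : ℂ) ^ 2 + (δ : ℂ) * Complex.I)).re ∧
      (branchSqrt ((k : ℂ) ^ 2 + (δ : ℂ) * Complex.I)).re ≤ Real.sqrt (k ^ 2 + δ / 2) := by
  set z : ℂ := (k : ℂ) ^ 2 + (δ : ℂ) * Complex.I with hz
  have hre : z.re = k ^ 2 := by simp [hz, ← Complex.ofReal_pow]
  have him : z.im = δ := by simp [hz, ← Complex.ofReal_pow]
  by_cases h0 : z = 0
  · have hk : k = 0 := by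
      have := congrArg Complex.re h0
      rw [hre] at this
      simpa [pow_eq_zero_iff] using this
    simp [branchSqrt, h0, hk]
    positivity
  · have harg : 0 ≤ Complex.arg z := Complex.arg_nonneg_iff.mpr (by rw [him]; exact hδ)
    have hargle : Complex.arg z ≤ Real.pi := Complex.arg_le_pi z
    have hnn : ¬ Complex.arg z < 0 := not_lt.mpr harg
    have habs_pos : 0 < ‖z‖ := norm_pos_iff.mpr h0
    -- compute the real part
    have hmain : (branchSqrt z).re =
        Real.sqrt ((‖z‖ + k ^ 2) / 2) := by
      rw [branchSqrt, if_neg h0, if_neg hnn]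
      have : Complex.I * ((Complex.arg z : ℂ) / 2) =
          ((Complex.arg z / 2 : ℝ) : ℂ) * Complex.I := by
        push_cast; ring
      rw [this, Complex.re_ofReal_mul, Complex.exp_ofReal_mul_I_re]
      rw [Real.cos_half (by linarith [Real.pi_pos]) hargle, Complex.cos_arg h0, hre]
      rw [← Real.sqrt_mul habs_pos.le]
      congr 1
      field_simp
    have hle1 : k ^ 2 ≤ ‖z‖ := by
      calc k ^ 2 = z.re := hre.symm
        _ ≤ |z.re| := le_abs_self _
        _ ≤ ‖z‖ := Complex.abs_re_le_norm z
    have hle2 : ‖z‖ ≤ k ^ 2 + δ := by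
      have h1 : (‖z‖) ^ 2 = (k ^ 2) ^ 2 + δ ^ 2 := by
        rw [Complex.sq_norm, Complex.normSq_apply, hre, him]; ring
      nlinarith [norm_nonneg z, sq_nonneg k]
    constructor
    · rw [hmain]
      calc |k| = Real.sqrt (k ^ 2) := (Real.sqrt_sq_eq_abs k).symm
        _ ≤ _ := Real.sqrt_le_sqrt (by linarith)
    · rw [hmain]
      exact Real.sqrt_le_sqrt (by linarith)
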